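/- Let A be a symmetric p×p real matrix with spectral decomposition A = Σ_j v_j γ_j γ_jᵀ (eigenvalues v_j, orthonormal eigenvectors γ_j), and let ε > 0. Then the matrix Ã = Σ_j max(v_j, ε) γ_j γ_jᵀ is symmetric positive definite, and Ã minimizes ‖A − Q‖_F² over all symmetric matrices Q with Q − εI positive semidefinite. -/

import Mathlib

open scoped BigOperators

/-- Squared Frobenius norm of a real matrix. -/
noncomputable def frobSq {p : ℕ} (A : Matrix (Fin p) (Fin p) ℝ) : ℝ :=
  ∑ i, ∑ j, A i j ^ 2

open Matrix

lemma frobSq_eq_trace {p : ℕ} (M : Matrix (Fin p) (Fin p) ℝ) :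
    frobSq M = (Mᵀ * M).trace := by
  simp only [frobSq, Matrix.trace, Matrix.diag, Matrix.mul_apply, Matrix.transpose_apply, sq]
  exact Finset.sum_comm

lemma frobSq_conj {p : ℕ} (G X : Matrix (Fin p) (Fin p) ℝ)
    (h1 : Gᵀ * G = 1) (h2 : G * Gᵀ = 1) :
    frobSq (G * X * Gᵀ) = frobSq X := by
  rw [frobSq_eq_trace, frobSq_eq_trace]
  have key : (G * X * Gᵀ)ᵀ * (G * X * Gᵀ) = G * (Xᵀ * X) * Gᵀ := by
    simp only [Matrix.transpose_mul, Matrix.transpose_transpose, Matrix.mul_assoc]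
    rw [← Matrix.mul_assoc Gᵀ G, h1, Matrix.one_mul]
  rw [key, Matrix.mul_assoc, Matrix.trace_mul_comm, Matrix.mul_assoc, h1, Matrix.mul_one]

theorem eigenvalue_truncation_projection {p : ℕ} (A : Matrix (Fin p) (Fin p) ℝ)
    (hA : A.IsSymm) (v : Fin p → ℝ) (γ : Fin p → EuclideanSpace ℝ (Fin p))
    (hortho : Orthonormal ℝ γ)
    (hdecomp : A = ∑ j, v j • Matrix.of (fun i k => γ j i * γ j k))
    (ε : ℝ) (hε : 0 < ε) :
    let Atilde : Matrix (Fin p) (Fin p) ℝ :=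
      ∑ j, max (v j) ε • Matrix.of (fun i k => γ j i * γ j k)
    Atilde.IsSymm ∧ Atilde.PosDef ∧
      (Atilde - ε • (1 : Matrix (Fin p) (Fin p) ℝ)).PosSemidef ∧
      (∀ Q : Matrix (Fin p) (Fin p) ℝ, Q.IsSymm →
        (Q - ε • (1 : Matrix (Fin p) (Fin p) ℝ)).PosSemidef →
        frobSq (A - Atilde) ≤ frobSq (A - Q)) := by
  intro Atilde
  set G : Matrix (Fin p) (Fin p) ℝ := Matrix.of (fun i j => γ j i) with hGdef
  have hGtG : Gᵀ * G = 1 := by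
    ext j k
    have := orthonormal_iff_ite.mp hortho j k
    simp only [PiLp.inner_apply, RCLike.inner_apply, starRingEnd_apply, star_trivial] at this
    simpa [Matrix.mul_apply, Matrix.one_apply, hGdef, mul_comm] using this
  have hGGt : G * Gᵀ = 1 := mul_eq_one_comm.mp hGtG
  have hsum : ∀ w : Fin p → ℝ,
      (∑ j, w j • Matrix.of (fun i k => γ j i * γ j k)) = G * Matrix.diagonal w * Gᵀ := by
    intro w
    ext i k
    simp only [Matrix.sum_apply, Matrix.smul_apply, Matrix.of_apply, smul_eq_mul,
      Matrix.mul_apply, Matrix.mul_diagonal, Matrix.transpose_apply, hGdef]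
    refine Finset.sum_congr rfl fun j _ => ?_
    rw [Finset.sum_eq_single j (fun b _ hb => by simp [Matrix.diagonal_apply_ne _ hb])
      (fun h => absurd (Finset.mem_univ j) h)]
    rw [Matrix.diagonal_apply_eq]
    ring
  have hAeq : A = G * Matrix.diagonal v * Gᵀ := by rw [hdecomp, hsum]
  have hAteq : Atilde = G * Matrix.diagonal (fun j => max (v j) ε) * Gᵀ := hsum _
  have hone : ε • (1 : Matrix (Fin p) (Fin p) ℝ) = G * (ε • 1) * Gᵀ := by
    rw [Matrix.mul_smul, Matrix.mul_one, Matrix.smul_mul, hGGt]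
  have hsub : Atilde - ε • (1 : Matrix (Fin p) (Fin p) ℝ)
      = G * Matrix.diagonal (fun j => max (v j) ε - ε) * Gᵀ := by
    rw [hAteq, hone, ← Matrix.sub_mul, ← Matrix.mul_sub]
    congr 2
    rw [Matrix.smul_one_eq_diagonal, Matrix.diagonal_sub]
  have hpsd : (Atilde - ε • (1 : Matrix (Fin p) (Fin p) ℝ)).PosSemidef := by
    rw [hsub]
    have hd : (Matrix.diagonal (fun j => max (v j) ε - ε)).PosSemidef :=
      Matrix.posSemidef_diagonal_iff.mpr fun j => by simp [sub_nonneg, le_max_right]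
    simpa using hd.mul_mul_conjTranspose_same G
  have hsymm : Atilde.IsSymm := by
    rw [hAteq, Matrix.IsSymm]
    simp only [Matrix.transpose_mul, Matrix.transpose_transpose,
      Matrix.diagonal_transpose, Matrix.mul_assoc]
  have hpd : Atilde.PosDef := by
    have h1 : Atilde = (Atilde - ε • (1 : Matrix (Fin p) (Fin p) ℝ)) + ε • 1 := by abel
    rw [h1]
    refine Matrix.PosDef.posSemidef_add hpsd ?_
    rw [Matrix.smul_one_eq_diagonal]
    exact Matrix.PosDef.diagonal fun i => hε
  refine ⟨hsymm, hpd, hpsd, ?_⟩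
  intro Q hQ hQpsd
  set R := Gᵀ * Q * G with hR
  have hQeq : G * R * Gᵀ = Q := by
    rw [hR]
    calc G * (Gᵀ * Q * G) * Gᵀ = (G * Gᵀ) * Q * (G * Gᵀ) := by
          simp only [Matrix.mul_assoc]
      _ = Q := by rw [hGGt, Matrix.one_mul, Matrix.mul_one]
  have hfrobQ : frobSq (A - Q) = frobSq (Matrix.diagonal v - R) := by
    have key : A - Q = G * (Matrix.diagonal v - R) * Gᵀ := by
      rw [Matrix.mul_sub, Matrix.sub_mul, hQeq, ← hAeq]
    rw [key, frobSq_conj _ _ hGtG hGGt]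
  have hfrobA : frobSq (A - Atilde) = ∑ j, (v j - max (v j) ε) ^ 2 := by
    have key : A - Atilde = G * Matrix.diagonal (fun j => v j - max (v j) ε) * Gᵀ := by
      rw [hAeq, hAteq, ← Matrix.sub_mul, ← Matrix.mul_sub, Matrix.diagonal_sub]
    rw [key, frobSq_conj _ _ hGtG hGGt, frobSq]
    simp [Matrix.diagonal_apply, apply_ite (· ^ 2 : ℝ → ℝ)]
  have hRpsd : (R - ε • (1 : Matrix (Fin p) (Fin p) ℝ)).PosSemidef := by
    have h1 : Gᵀ * (Q - ε • (1 : Matrix (Fin p) (Fin p) ℝ)) * Gᵀᴴ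
        = R - ε • (1 : Matrix (Fin p) (Fin p) ℝ) := by
      have : (Gᵀᴴ : Matrix (Fin p) (Fin p) ℝ) = G := by
        ext i j; simp [Matrix.conjTranspose_apply]
      rw [this, Matrix.mul_sub, Matrix.sub_mul, hR]
      congr 1
      rw [Matrix.mul_smul, Matrix.smul_mul, Matrix.mul_one, hGtG]
    rw [← h1]
    exact hQpsd.mul_mul_conjTranspose_same Gᵀ
  have hRdiag : ∀ j, ε ≤ R j j := by
    intro j
    have h := hRpsd.dotProduct_mulVec_nonneg (Pi.single j 1)
    have heq : star (Pi.single j 1 : Fin p → ℝ) ⬝ᵥ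
        ((R - ε • (1 : Matrix (Fin p) (Fin p) ℝ)) *ᵥ Pi.single j 1) = R j j - ε := by
      rw [Matrix.mulVec_single]
      simp [dotProduct, Pi.single_apply, Matrix.sub_apply, Matrix.smul_apply,
        Matrix.one_apply]
    rw [heq] at h
    linarith
  rw [hfrobA, hfrobQ, frobSq]
  calc ∑ j, (v j - max (v j) ε) ^ 2
      ≤ ∑ j, (v j - R j j) ^ 2 := by
        refine Finset.sum_le_sum fun j _ => ?_
        have := hRdiag j
        rcases le_total (v j) ε with h | h
        · rw [max_eq_right h]; nlinarith
        · rw [max_eq_left h]; nlinarith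
    _ ≤ ∑ i, ∑ j, (Matrix.diagonal v - R) i j ^ 2 := by
        refine Finset.sum_le_sum fun i _ => ?_
        have hdi : (v i - R i i) ^ 2 = (Matrix.diagonal v - R) i i ^ 2 := by
          simp [Matrix.diagonal]
        rw [hdi]
        exact Finset.single_le_sum (f := fun j => (Matrix.diagonal v - R) i j ^ 2)
          (fun j _ => sq_nonneg _) (Finset.mem_univ i)
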